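/- Let N1, N2, ℓ > 0 and let Z ⊆ [0, N1−ℓ] × [0, N2] be a zone. Let Q be a packing with every rectangle of Q contained in Z and of width at least 2ℓ. Set ℓ' = ℓ²/N1. Then the ℓ-rounded versions of the rectangles of Q (width w replaced by ℓ'·⌈w/ℓ'⌉, height unchanged) can be packed inside the positively shifted zone →Z⟨ℓ⟩ = (⋃_{(x,y)∈Z} [x, x+ℓ] × {y}) ∩ ([0, N1] × [0, N2]). -/

import Mathlib

/-- A placed axis-parallel rectangle `[x, x+w] × [y, y+h]`. -/
structure PRect where
  x : ℝ
  y : ℝ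
  w : ℝ
  h : ℝ

namespace PRect

/-- The rectangle as a subset of the plane. -/
def toSet (R : PRect) : Set (ℝ × ℝ) :=
  Set.Icc R.x (R.x + R.w) ×ˢ Set.Icc R.y (R.y + R.h)

/-- The (open) interior of a placed rectangle. -/
def inter (R : PRect) : Set (ℝ × ℝ) :=
  Set.Ioo R.x (R.x + R.w) ×ˢ Set.Ioo R.y (R.y + R.h)

/-- Two placed rectangles overlap if their interiors intersect. -/
def Overlap (R R' : PRect) : Prop := (R.inter ∩ R'.inter).Nonempty

/-- The rectangle has positive width and height. -/
def Proper (R : PRect) : Prop := 0 < R.w ∧ 0 < R.h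

/-- The left side `{x} × [y, y+h]`. -/
def leftSide (R : PRect) : Set (ℝ × ℝ) := {R.x} ×ˢ Set.Icc R.y (R.y + R.h)

/-- The right side `{x+w} × [y, y+h]`. -/
def rightSide (R : PRect) : Set (ℝ × ℝ) := {R.x + R.w} ×ˢ Set.Icc R.y (R.y + R.h)

/-- The bottom side `[x, x+w] × {y}`. -/
def bottomSide (R : PRect) : Set (ℝ × ℝ) := Set.Icc R.x (R.x + R.w) ×ˢ {R.y}

/-- The top side `[x, x+w] × {y+h}`. -/
def topSide (R : PRect) : Set (ℝ × ℝ) := Set.Icc R.x (R.x + R.w) ×ˢ {R.y + R.h}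

end PRect

/-- The box `[0, N1] × [0, N2]`. -/
def box (N1 N2 : ℝ) : Set (ℝ × ℝ) := Set.Icc 0 N1 ×ˢ Set.Icc 0 N2

/-- The placed rectangle `[-1, 0] × [0, N2]` associated with the left side of the box. -/
def Rleft (N2 : ℝ) : PRect := ⟨-1, 0, 1, N2⟩

/-- The placed rectangle `[N1, N1+1] × [0, N2]` associated with the right side of the box. -/
def Rright (N1 N2 : ℝ) : PRect := ⟨N1, 0, 1, N2⟩

/-- `R` sees `R'` from the left: `x(R) + w(R) ≤ x(R')` and there is a height `yy`,
strictly inside the vertical extents of both `R` and `R'`, such that the horizontal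
segment `[x(R)+w(R), x(R')] × {yy}` is disjoint from every rectangle of the
packing `Q` other than `R` and `R'`. -/
def SeesDir (Q : Set PRect) (R R' : PRect) : Prop :=
  R.x + R.w ≤ R'.x ∧ ∃ yy : ℝ,
    R.y < yy ∧ yy < R.y + R.h ∧ R'.y < yy ∧ yy < R'.y + R'.h ∧
    ∀ T ∈ Q, T ≠ R → T ≠ R' →
      ∀ xx : ℝ, R.x + R.w ≤ xx → xx ≤ R'.x → (xx, yy) ∉ T.toSet

/-- Two distinct placed rectangles see each other (in the packing `Q`). -/
def Sees (Q : Set PRect) (R R' : PRect) : Prop :=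
  R ≠ R' ∧ (SeesDir Q R R' ∨ SeesDir Q R' R)

/-- Adjacency in the conflict graph of the packing `Q` inside `[0,N1] × [0,N2]`:
the vertices are the rectangles of `Q` together with `Rleft N2` (the vertex `s`) and
`Rright N1 N2` (the vertex `t`); two vertices are adjacent iff they see each other,
except that the left and right sides are not adjacent to each other. -/
def ConflictAdj (N1 N2 : ℝ) (Q : Set PRect) (u v : PRect) : Prop :=
  u ∈ Q ∪ {Rleft N2, Rright N1 N2} ∧ v ∈ Q ∪ {Rleft N2, Rright N1 N2} ∧
  ¬ (u ∈ ({Rleft N2, Rright N1 N2} : Set PRect) ∧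
     v ∈ ({Rleft N2, Rright N1 N2} : Set PRect)) ∧
  Sees Q u v

/-- The center of a placed rectangle. In particular the center of `Rleft N2` is
`(-1/2, N2/2)` and the center of `Rright N1 N2` is `(N1 + 1/2, N2/2)`. -/
noncomputable def PRect.center (R : PRect) : ℝ × ℝ := (R.x + R.w / 2, R.y + R.h / 2)

/-- `C` is an `st`-separator in the conflict graph of `Q`: `C ⊆ Q` and every path from
`s = Rleft N2` to `t = Rright N1 N2` in the conflict graph contains a vertex of `C`. -/
def IsSTSeparator (N1 N2 : ℝ) (Q : Set PRect) (C : Set PRect) : Prop :=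
  C ⊆ Q ∧
  ∀ (n : ℕ) (v : Fin (n + 1) → PRect),
    Function.Injective v →
    v 0 = Rleft N2 → v (Fin.last n) = Rright N1 N2 →
    (∀ i : Fin n, ConflictAdj N1 N2 Q (v i.castSucc) (v i.succ)) →
    ∃ i, v i ∈ C

/-- The negatively shifted zone `←Z⟨ℓ⟩ = (⋃_{(x,y)∈Z} [x−ℓ,x] × {y}) ∩ ([0,N1−ℓ] × [0,N2])`. -/
def shiftNeg (Z : Set (ℝ × ℝ)) (ℓ N1 N2 : ℝ) : Set (ℝ × ℝ) :=
  {p | ∃ x : ℝ, (x, p.2) ∈ Z ∧ x - ℓ ≤ p.1 ∧ p.1 ≤ x} ∩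
    (Set.Icc 0 (N1 - ℓ) ×ˢ Set.Icc 0 N2)

/-- The positively shifted zone `→Z⟨ℓ⟩ = (⋃_{(x,y)∈Z} [x,x+ℓ] × {y}) ∩ ([0,N1] × [0,N2])`. -/
def shiftPos (Z : Set (ℝ × ℝ)) (ℓ N1 N2 : ℝ) : Set (ℝ × ℝ) :=
  {p | ∃ x : ℝ, (x, p.2) ∈ Z ∧ x ≤ p.1 ∧ p.1 ≤ x + ℓ} ∩
    (Set.Icc 0 N1 ×ˢ Set.Icc 0 N2)

/-- The rounded zone `↔Z⟨ℓ⟩ = (⋃_{(x,y)∈Z} [x−ℓ,x+ℓ] × {y}) ∩ ([0,N1] × [0,N2])`. -/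
def shiftBoth (Z : Set (ℝ × ℝ)) (ℓ N1 N2 : ℝ) : Set (ℝ × ℝ) :=
  {p | ∃ x : ℝ, (x, p.2) ∈ Z ∧ x - ℓ ≤ p.1 ∧ p.1 ≤ x + ℓ} ∩
    (Set.Icc 0 N1 ×ˢ Set.Icc 0 N2)

/-- The family of rectangles indexed by `F`, where the member indexed by `R ∈ F` has
width `dw R` and height `dh R`, can be packed inside the zone `Z`: there is an
assignment of pairwise non-overlapping placed rectangles of these dimensions, each
contained in `Z`. -/
def CanPackDims (F : Set PRect) (dw dh : PRect → ℝ) (Z : Set (ℝ × ℝ)) : Prop :=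
  ∃ f : PRect → PRect,
    (∀ R ∈ F, (f R).w = dw R ∧ (f R).h = dh R ∧ (f R).toSet ⊆ Z) ∧
    ∀ R ∈ F, ∀ R' ∈ F, R ≠ R' → ¬ (f R).Overlap (f R')

/-- If `Q` is a packing inside a zone `Z ⊆ [0, N1−ℓ] × [0, N2]` with all widths at
least `2ℓ`, then the `ℓ`-rounded versions of the rectangles of `Q` (width `w` replaced
by `ℓ'·⌈w/ℓ'⌉` where `ℓ' = ℓ²/N1`, height unchanged) can be packed inside the
positively shifted zone `→Z⟨ℓ⟩`. -/
theorem pack_rounded_in_shiftPos (N1 N2 ℓ : ℝ) (hN1 : 0 < N1) (hN2 : 0 < N2)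
    (hℓ : 0 < ℓ)
    (Z : Set (ℝ × ℝ)) (hZ : Z ⊆ Set.Icc 0 (N1 - ℓ) ×ˢ Set.Icc 0 N2)
    (Q : Set PRect) (hfin : Q.Finite)
    (hproper : ∀ R ∈ Q, R.Proper)
    (hpack : ∀ R ∈ Q, ∀ R' ∈ Q, R ≠ R' → ¬ R.Overlap R')
    (hin : ∀ R ∈ Q, R.toSet ⊆ Z)
    (hwidth : ∀ R ∈ Q, 2 * ℓ ≤ R.w) :
    CanPackDims Q
      (fun R => (ℓ ^ 2 / N1) * (⌈R.w / (ℓ ^ 2 / N1)⌉ : ℝ))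
      (fun R => R.h)
      (shiftPos Z ℓ N1 N2) := by
  classical
  have hℓ'pos : (0:ℝ) < ℓ ^ 2 / N1 := by positivity
  set ℓ' : ℝ := ℓ ^ 2 / N1 with hℓ'def
  -- bounds for each rectangle of Q
  have hb : ∀ R ∈ Q, 0 ≤ R.x ∧ R.x + R.w ≤ N1 - ℓ ∧ 0 ≤ R.y ∧ R.y + R.h ≤ N2 := by
    intro R hR
    obtain ⟨hw0, hh0⟩ := hproper R hR
    have h1 : ((R.x, R.y) : ℝ × ℝ) ∈ R.toSet :=
      ⟨⟨le_rfl, by linarith⟩, ⟨le_rfl, by linarith⟩⟩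
    have h2 : ((R.x + R.w, R.y + R.h) : ℝ × ℝ) ∈ R.toSet :=
      ⟨⟨by show R.x ≤ R.x + R.w; linarith, le_rfl⟩,
       by show R.y ≤ R.y + R.h; linarith, le_rfl⟩
    have hz1 := hZ (hin R hR h1)
    have hz2 := hZ (hin R hR h2)
    exact ⟨hz1.1.1, hz2.1.2, hz1.2.1, hz2.2.2⟩
  -- rounding facts
  have hround : ∀ R : PRect, R.w ≤ ℓ' * ⌈R.w / ℓ'⌉ ∧ ℓ' * ⌈R.w / ℓ'⌉ ≤ R.w + ℓ' := by
    intro R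
    have h1 : R.w / ℓ' ≤ (⌈R.w / ℓ'⌉ : ℝ) := Int.le_ceil _
    have h2 : (⌈R.w / ℓ'⌉ : ℝ) < R.w / ℓ' + 1 := Int.ceil_lt_add_one _
    have hc : ℓ' * (R.w / ℓ') = R.w := mul_div_cancel₀ _ (ne_of_gt hℓ'pos)
    constructor
    · nlinarith [mul_le_mul_of_nonneg_left h1 hℓ'pos.le]
    · nlinarith [mul_le_mul_of_nonneg_left h2.le hℓ'pos.le]
  -- shift arithmetic
  have hshift0 : ∀ a : ℝ, 0 ≤ a → 0 ≤ a * ℓ / (2 * N1) := by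
    intro a ha; positivity
  have hshiftℓ : ∀ a : ℝ, a ≤ N1 - 3 * ℓ → a * ℓ / (2 * N1) + ℓ' ≤ ℓ := by
    intro a ha
    rw [hℓ'def, div_add_div _ _ (by positivity) (by positivity),
      div_le_iff₀ (by positivity)]
    nlinarith [mul_le_mul_of_nonneg_right ha (mul_nonneg hℓ.le hN1.le),
      mul_pos hN1 (mul_pos hℓ hℓ), mul_pos (mul_pos hN1 hN1) hℓ]
  have hshiftmono : ∀ a b : ℝ, a + 2 * ℓ ≤ b →
      a * ℓ / (2 * N1) + ℓ' ≤ b * ℓ / (2 * N1) := by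
    intro a b hab
    have h1 : ℓ' = 2 * ℓ * ℓ / (2 * N1) := by
      rw [hℓ'def]; field_simp
    rw [h1, ← add_div, div_le_div_iff₀ (by positivity) (by positivity)]
    nlinarith [mul_le_mul_of_nonneg_right hab (mul_nonneg hℓ.le (by positivity : (0:ℝ) ≤ 2 * N1))]
  -- the packing map
  refine ⟨fun R => ⟨R.x + R.x * ℓ / (2 * N1), R.y, ℓ' * ⌈R.w / ℓ'⌉, R.h⟩, ?_, ?_⟩
  · intro R hR
    obtain ⟨hx0, hxw, hy0, hyh⟩ := hb R hR
    obtain ⟨hw0, hh0⟩ := hproper R hR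
    obtain ⟨hr1, hr2⟩ := hround R
    have hwℓ := hwidth R hR
    have hs0 : 0 ≤ R.x * ℓ / (2 * N1) := hshift0 _ hx0
    have hsℓ : R.x * ℓ / (2 * N1) + ℓ' ≤ ℓ := hshiftℓ _ (by linarith)
    refine ⟨rfl, rfl, ?_⟩
    rintro ⟨u, v⟩ ⟨⟨hu1, hu2⟩, hv1, hv2⟩
    simp only at hu1 hu2 hv1 hv2
    have hu1' : R.x ≤ u := by linarith
    have hu2' : u ≤ R.x + R.w + ℓ := by linarith
    have hmem : ((min u (R.x + R.w), v) : ℝ × ℝ) ∈ R.toSet :=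
      ⟨⟨le_min hu1' (by linarith), min_le_right _ _⟩, hv1, hv2⟩
    refine ⟨⟨min u (R.x + R.w), hin R hR hmem, min_le_left _ _, ?_⟩,
      ⟨by linarith, by linarith⟩, by linarith, by linarith⟩
    rcases le_total u (R.x + R.w) with h | h
    · rw [min_eq_left h]; linarith
    · rw [min_eq_right h]; linarith
  · -- non-overlap
    intro R hR R' hR' hne hov
    obtain ⟨⟨u, v⟩, hp1, hp2⟩ := hov
    obtain ⟨⟨hu1, hu2⟩, hv1, hv2⟩ := hp1
    obtain ⟨⟨hu1', hu2'⟩, hv1', hv2'⟩ := hp2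
    simp only at hu1 hu2 hv1 hv2 hu1' hu2' hv1' hv2'
    obtain ⟨hw0, hh0⟩ := hproper R hR
    obtain ⟨hw0', hh0'⟩ := hproper R' hR'
    -- separation of originals
    have hsep : R.x + R.w ≤ R'.x ∨ R'.x + R'.w ≤ R.x ∨
        R.y + R.h ≤ R'.y ∨ R'.y + R'.h ≤ R.y := by
      by_contra hcon
      push_neg at hcon
      obtain ⟨h1, h2, h3, h4⟩ := hcon
      apply hpack R hR R' hR' hne
      have hmx : max R.x R'.x < min (R.x + R.w) (R'.x + R'.w) :=
        lt_min (max_lt (by linarith) h1) (max_lt h2 (by linarith))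
      have hmy : max R.y R'.y < min (R.y + R.h) (R'.y + R'.h) :=
        lt_min (max_lt (by linarith) h3) (max_lt h4 (by linarith))
      set a := (max R.x R'.x + min (R.x + R.w) (R'.x + R'.w)) / 2 with ha
      set b := (max R.y R'.y + min (R.y + R.h) (R'.y + R'.h)) / 2 with hb2
      have e1 := le_max_left R.x R'.x
      have e2 := le_max_right R.x R'.x
      have e3 := min_le_left (R.x + R.w) (R'.x + R'.w)
      have e4 := min_le_right (R.x + R.w) (R'.x + R'.w)
      have e5 := le_max_left R.y R'.y
      have e6 := le_max_right R.y R'.y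
      have e7 := min_le_left (R.y + R.h) (R'.y + R'.h)
      have e8 := min_le_right (R.y + R.h) (R'.y + R'.h)
      exact ⟨(a, b), ⟨⟨by simp only [ha]; linarith, by simp only [ha]; linarith⟩,
        by simp only [hb2]; linarith, by simp only [hb2]; linarith⟩,
        ⟨⟨by simp only [ha]; linarith, by simp only [ha]; linarith⟩,
        by simp only [hb2]; linarith, by simp only [hb2]; linarith⟩⟩
    rcases hsep with h | h | h | h
    · have hkey : R.x * ℓ / (2 * N1) + ℓ' ≤ R'.x * ℓ / (2 * N1) :=
        hshiftmono _ _ (by linarith [hwidth R hR])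
      have := (hround R).2
      linarith
    · have hkey : R'.x * ℓ / (2 * N1) + ℓ' ≤ R.x * ℓ / (2 * N1) :=
        hshiftmono _ _ (by linarith [hwidth R' hR'])
      have := (hround R').2
      linarith
    · linarith
    · linarith
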